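/- Let R ∈ SO(2), G ∈ ℝ^{2×2}, δ ∈ ℝ, let ε_j > 0 be a sequence with ε_j → 0, and let δ_j ∈ ℝ satisfy δ_j / √ε_j → δ. Then lim_{j→∞} ε_j^{-1} · W_{1+δ_j}(R + √ε_j · G) = Σ_{k=1}^{3} (e_kᵀ (E − δ·I₂) e_k)², where E = (1/2)(Rᵀ G + Gᵀ R) is the symmetric part of Rᵀ G and I₂ is the 2×2 identity matrix. -/

import Mathlib

open Matrix Filter

/-- Euclidean norm on `ℝ²`. -/
noncomputable def vnorm (v : Fin 2 → ℝ) : ℝ := Real.sqrt (v 0 ^ 2 + v 1 ^ 2)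

/-- The three unit bond directions of the equilateral triangular lattice. -/
noncomputable def ebond : Fin 3 → (Fin 2 → ℝ) :=
  ![![1, 0], ![1 / 2, Real.sqrt 3 / 2], ![-(1 / 2), Real.sqrt 3 / 2]]

/-- The cell energy density `W_λ`. -/
noncomputable def Wcell (l : ℝ) (F : Matrix (Fin 2) (Fin 2) ℝ) : ℝ :=
  (vnorm (F.mulVec (ebond 0)) - l) ^ 2 + (vnorm (F.mulVec (ebond 1)) - l) ^ 2 +
    (vnorm (F.mulVec (ebond 2)) - l) ^ 2

/-- `SO(2)`: real orthogonal `2 × 2` matrices with determinant one. -/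
def SO2 : Set (Matrix (Fin 2) (Fin 2) ℝ) :=
  {R | R.transpose * R = 1 ∧ R.det = 1}

lemma vnorm_eq (v : Fin 2 → ℝ) : vnorm v = Real.sqrt (v ⬝ᵥ v) := by
  simp [vnorm, dotProduct, Fin.sum_univ_two, sq]


lemma key (R G : Matrix (Fin 2) (Fin 2) ℝ) (hR : R.transpose * R = 1)
    (e : Fin 2 → ℝ) (he : e ⬝ᵥ e = 1) (δ : ℝ)
    (ε δseq : ℕ → ℝ) (hε : ∀ j, 0 < ε j) (hε0 : Tendsto ε atTop (nhds 0))
    (hδ : Tendsto (fun j => δseq j / Real.sqrt (ε j)) atTop (nhds δ)) :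
    Tendsto (fun j => (ε j)⁻¹ *
      (vnorm ((R + Real.sqrt (ε j) • G).mulVec e) - (1 + δseq j)) ^ 2) atTop
      (nhds ((e ⬝ᵥ (((1/2:ℝ) • (R.transpose * G + G.transpose * R)).mulVec e) - δ) ^ 2)) := by
  set a := e ⬝ᵥ (((1/2:ℝ) • (R.transpose * G + G.transpose * R)).mulVec e) with ha
  set b := (G.mulVec e) ⬝ᵥ (G.mulVec e) with hb
  have h00 := congrFun (congrFun hR 0) 0
  have h01 := congrFun (congrFun hR 0) 1
  have h10 := congrFun (congrFun hR 1) 0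
  have h11 := congrFun (congrFun hR 1) 1
  simp [Matrix.mul_apply, Fin.sum_univ_two, Matrix.transpose_apply, Matrix.one_apply] at h00 h01 h10 h11
  have he2 : e 0 * e 0 + e 1 * e 1 = 1 := by simpa [dotProduct, Fin.sum_univ_two] using he
  have hq : ∀ t : ℝ, ((R + t • G).mulVec e) ⬝ᵥ ((R + t • G).mulVec e)
      = 1 + 2*t*a + t^2*b := by
    intro t
    simp only [ha, hb, mulVec, dotProduct, Fin.sum_univ_two, Matrix.add_apply,
      Matrix.smul_apply, Matrix.mul_apply, Matrix.transpose_apply, smul_eq_mul]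
    linear_combination (e 0)^2 * h00 + (e 0)*(e 1)*h01 + (e 0)*(e 1)*h10 + (e 1)^2 * h11 + he2
  have hq0 : ∀ t : ℝ, 0 ≤ 1 + 2*t*a + t^2*b := by
    intro t
    rw [← hq t]
    set v := (R + t • G).mulVec e
    have : v ⬝ᵥ v = v 0 * v 0 + v 1 * v 1 := by simp [dotProduct, Fin.sum_univ_two]
    rw [this]; nlinarith [sq_nonneg (v 0), sq_nonneg (v 1)]
  -- t j := sqrt (ε j)
  have htpos : ∀ j, 0 < Real.sqrt (ε j) := fun j => Real.sqrt_pos.2 (hε j)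
  have ht2 : ∀ j, Real.sqrt (ε j) ^ 2 = ε j := fun j => Real.sq_sqrt (hε j).le
  -- pointwise identity
  have main : ∀ j, (ε j)⁻¹ *
      (vnorm ((R + Real.sqrt (ε j) • G).mulVec e) - (1 + δseq j)) ^ 2
      = ((2*a + Real.sqrt (ε j)*b) /
          (Real.sqrt (1 + 2*Real.sqrt (ε j)*a + Real.sqrt (ε j)^2*b) + 1)
          - δseq j / Real.sqrt (ε j)) ^ 2 := by
    intro j
    set t := Real.sqrt (ε j) with htdef
    have ht : 0 < t := htpos j
    set s := Real.sqrt (1 + 2*t*a + t^2*b) with hsdef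
    have hs0 : 0 ≤ s := Real.sqrt_nonneg _
    have hss : s ^ 2 = 1 + 2*t*a + t^2*b := Real.sq_sqrt (hq0 t)
    have hv : vnorm ((R + t • G).mulVec e) = s := by
      rw [vnorm_eq, hq t]
    rw [hv, ← ht2 j]
    have hs1 : s + 1 ≠ 0 := by positivity
    have h1 : (s - (1 + δseq j)) * (s + 1) = ((2*a + t*b)*t - δseq j*(s+1)) := by
      linear_combination hss
    have h2 : (2*a + t*b)/(s+1) - δseq j / t = (s - (1+δseq j))/t := by
      rw [div_sub_div _ _ hs1 ht.ne', div_eq_div_iff (by positivity) ht.ne']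
      linear_combination t * h1 - 2*t*hss
    rw [h2, div_pow, inv_mul_eq_div]
  have htend : Tendsto (fun j => Real.sqrt (ε j)) atTop (nhds 0) := by
    have h := (Real.continuous_sqrt.tendsto 0).comp hε0
    simpa [Function.comp_def] using h
  have hnum : Tendsto (fun j => 2*a + Real.sqrt (ε j)*b) atTop (nhds (2*a)) := by
    have h := (tendsto_const_nhds : Tendsto (fun _ : ℕ => (2*a:ℝ)) atTop (nhds (2*a))).add
      (htend.mul_const b)
    simpa using h
  have hqlim : Tendsto (fun j => 1 + 2*Real.sqrt (ε j)*a + Real.sqrt (ε j)^2*b)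
      atTop (nhds 1) := by
    have h := ((tendsto_const_nhds : Tendsto (fun _ : ℕ => (1:ℝ)) atTop (nhds 1)).add
      (((htend.const_mul 2)).mul_const a)).add ((htend.pow 2).mul_const b)
    simpa using h
  have hsq : Tendsto (fun j => Real.sqrt (1 + 2*Real.sqrt (ε j)*a + Real.sqrt (ε j)^2*b))
      atTop (nhds 1) := by
    have h := (Real.continuous_sqrt.tendsto 1).comp hqlim
    simpa [Function.comp_def] using h
  have hden : Tendsto (fun j => Real.sqrt (1 + 2*Real.sqrt (ε j)*a + Real.sqrt (ε j)^2*b) + 1)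
      atTop (nhds 2) := by
    have h := hsq.add (tendsto_const_nhds : Tendsto (fun _ : ℕ => (1:ℝ)) atTop (nhds 1))
    norm_num at h
    exact h
  have hfrac := hnum.div hden (by norm_num)
  have h2a : (2*a)/(2:ℝ) = a := by ring
  rw [h2a] at hfrac
  have hg := (hfrac.sub hδ).pow 2
  exact hg.congr (fun j => (main j).symm)

/-- Let `R ∈ SO(2)`, `G ∈ ℝ^{2×2}`, `δ ∈ ℝ`, let `ε_j > 0` tend to `0` and
`δ_j / √ε_j → δ`.  Then
`ε_j⁻¹ · W_{1+δ_j}(R + √ε_j G) → Σ_{k=1}^{3} (e_kᵀ (E − δ·I₂) e_k)²`,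
where `E = (1/2)(Rᵀ G + Gᵀ R)`. -/
theorem stmt4 (R G : Matrix (Fin 2) (Fin 2) ℝ) (hR : R ∈ SO2) (δ : ℝ)
    (ε δseq : ℕ → ℝ) (hε : ∀ j, 0 < ε j) (hε0 : Tendsto ε atTop (nhds 0))
    (hδ : Tendsto (fun j => δseq j / Real.sqrt (ε j)) atTop (nhds δ)) :
    Tendsto (fun j => (ε j)⁻¹ * Wcell (1 + δseq j) (R + Real.sqrt (ε j) • G)) atTop
      (nhds (∑ k : Fin 3,
        (ebond k ⬝ᵥ
          (((1 / 2 : ℝ) • (R.transpose * G + G.transpose * R) -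
            δ • (1 : Matrix (Fin 2) (Fin 2) ℝ)).mulVec (ebond k))) ^ 2)) := by
  obtain ⟨hR1, -⟩ := hR
  have h3 : Real.sqrt 3 ^ 2 = 3 := Real.sq_sqrt (by norm_num)
  have he : ∀ k : Fin 3, ebond k ⬝ᵥ ebond k = 1 := by
    intro k
    fin_cases k <;>
      simp [ebond, dotProduct, Fin.sum_univ_two] <;>
      nlinarith [h3]
  have hrhs : ∀ k : Fin 3,
      ebond k ⬝ᵥ (((1/2:ℝ) • (R.transpose * G + G.transpose * R) -
        δ • (1 : Matrix (Fin 2) (Fin 2) ℝ)).mulVec (ebond k))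
      = ebond k ⬝ᵥ (((1/2:ℝ) • (R.transpose * G + G.transpose * R)).mulVec (ebond k)) - δ := by
    intro k
    rw [Matrix.sub_mulVec, dotProduct_sub]
    congr 1
    rw [Matrix.smul_mulVec, Matrix.one_mulVec, dotProduct_smul, smul_eq_mul, he k, mul_one]
  have k0 := key R G hR1 (ebond 0) (he 0) δ ε δseq hε hε0 hδ
  have k1 := key R G hR1 (ebond 1) (he 1) δ ε δseq hε hε0 hδ
  have k2 := key R G hR1 (ebond 2) (he 2) δ ε δseq hε hε0 hδ
  have hsum := (k0.add k1).add k2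
  rw [Fin.sum_univ_three, hrhs 0, hrhs 1, hrhs 2]
  refine hsum.congr fun j => ?_
  simp only [Wcell]
  ring
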